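/- Let d, n ≥ 1, let Σ₀ be a positive definite real d×d matrix, τ₀ ∈ ℝ^d, X ∈ ℝ^{n×d} and Y ∈ ℝ^n, and set Σ = (Σ₀⁻¹ + XᵀX)⁻¹ and τ = Σ(Σ₀⁻¹ τ₀ + Xᵀ Y). Then τ₀ᵀ Σ₀⁻¹ τ₀ + Yᵀ Y − τᵀ Σ⁻¹ τ = (τ − τ₀)ᵀ Σ₀⁻¹ (τ − τ₀) + ‖Y − Xτ‖² ≥ 0; consequently, for any b₀ > 0 the updated scale parameter b* = b₀ + (1/2)(τ₀ᵀ Σ₀⁻¹ τ₀ + Yᵀ Y − τᵀ Σ⁻¹ τ) satisfies b* ≥ b₀ > 0, so the posterior normal-inverse-gamma distribution in Proposition 2 is well defined. -/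

import Mathlib

open Matrix

/-- with `S = (S₀⁻¹ + Xᵀ X)⁻¹` and `τ = S (S₀⁻¹ τ₀ + Xᵀ Y)`,
`τ₀ᵀ S₀⁻¹ τ₀ + Yᵀ Y − τᵀ S⁻¹ τ = (τ − τ₀)ᵀ S₀⁻¹ (τ − τ₀) + ‖Y − Xτ‖² ≥ 0`;
consequently for any `b₀ > 0`, `b* = b₀ + (1/2)(τ₀ᵀ S₀⁻¹ τ₀ + Yᵀ Y − τᵀ S⁻¹ τ)`
satisfies `b* ≥ b₀ > 0`. -/
theorem bstar_pos {d n : ℕ} (hd : 1 ≤ d) (hn : 1 ≤ n)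
    (S₀ : Matrix (Fin d) (Fin d) ℝ) (hS₀ : S₀.PosDef)
    (τ₀ : Fin d → ℝ) (X : Matrix (Fin n) (Fin d) ℝ) (Y : Fin n → ℝ)
    (S : Matrix (Fin d) (Fin d) ℝ) (hS : S = (S₀⁻¹ + Xᵀ * X)⁻¹)
    (τ : Fin d → ℝ) (hτ : τ = S *ᵥ (S₀⁻¹ *ᵥ τ₀ + Xᵀ *ᵥ Y)) :
    (τ₀ ⬝ᵥ (S₀⁻¹ *ᵥ τ₀) + Y ⬝ᵥ Y - τ ⬝ᵥ (S⁻¹ *ᵥ τ) =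
        (τ - τ₀) ⬝ᵥ (S₀⁻¹ *ᵥ (τ - τ₀)) + (Y - X *ᵥ τ) ⬝ᵥ (Y - X *ᵥ τ)) ∧
      0 ≤ τ₀ ⬝ᵥ (S₀⁻¹ *ᵥ τ₀) + Y ⬝ᵥ Y - τ ⬝ᵥ (S⁻¹ *ᵥ τ) ∧
      ∀ b₀ : ℝ, 0 < b₀ →
        b₀ ≤ b₀ + (1/2) * (τ₀ ⬝ᵥ (S₀⁻¹ *ᵥ τ₀) + Y ⬝ᵥ Y - τ ⬝ᵥ (S⁻¹ *ᵥ τ)) ∧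
        0 < b₀ + (1/2) * (τ₀ ⬝ᵥ (S₀⁻¹ *ᵥ τ₀) + Y ⬝ᵥ Y - τ ⬝ᵥ (S⁻¹ *ᵥ τ)) := by
  set M := S₀⁻¹ with hM
  have hMpd : M.PosDef := hS₀.inv
  have hXX : (Xᵀ * X).PosSemidef := by simpa using posSemidef_conjTranspose_mul_self X
  have hApd : (M + Xᵀ * X).PosDef := hMpd.add_posSemidef hXX
  have hdet : IsUnit (M + Xᵀ * X).det := isUnit_iff_ne_zero.mpr hApd.det_pos.ne'
  have hSinv : S⁻¹ = M + Xᵀ * X := by rw [hS, nonsing_inv_nonsing_inv _ hdet]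
  have hkey : S⁻¹ *ᵥ τ = M *ᵥ τ₀ + Xᵀ *ᵥ Y := by
    rw [hSinv, hτ, hS, mulVec_mulVec, mul_nonsing_inv _ hdet, one_mulVec]
  have hMsym : Mᵀ = M := by
    have := hMpd.isHermitian
    simpa [Matrix.IsHermitian, conjTranspose_eq_transpose_of_trivial] using this
  have c1 : τ ⬝ᵥ (M *ᵥ τ₀) = τ₀ ⬝ᵥ (M *ᵥ τ) := by
    rw [dotProduct_mulVec, dotProduct_comm, ← mulVec_transpose, hMsym]
  have c2 : (X *ᵥ τ) ⬝ᵥ Y = τ ⬝ᵥ (Xᵀ *ᵥ Y) := by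
    rw [dotProduct_comm, dotProduct_mulVec, dotProduct_comm, ← mulVec_transpose]
  have c2' : Y ⬝ᵥ (X *ᵥ τ) = τ ⬝ᵥ (Xᵀ *ᵥ Y) := by rw [← c2, dotProduct_comm]
  have c3 : (X *ᵥ τ) ⬝ᵥ (X *ᵥ τ) = τ ⬝ᵥ ((Xᵀ * X) *ᵥ τ) := by
    rw [dotProduct_mulVec, ← mulVec_transpose, mulVec_mulVec, dotProduct_comm]
  have c4 : τ ⬝ᵥ (M *ᵥ τ) + τ ⬝ᵥ ((Xᵀ * X) *ᵥ τ) = τ ⬝ᵥ (M *ᵥ τ₀) + τ ⬝ᵥ (Xᵀ *ᵥ Y) := by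
    rw [← dotProduct_add, ← dotProduct_add, ← add_mulVec, ← hSinv, hkey]
  have heq : τ₀ ⬝ᵥ (M *ᵥ τ₀) + Y ⬝ᵥ Y - τ ⬝ᵥ (S⁻¹ *ᵥ τ) =
      (τ - τ₀) ⬝ᵥ (M *ᵥ (τ - τ₀)) + (Y - X *ᵥ τ) ⬝ᵥ (Y - X *ᵥ τ) := by
    rw [hkey, dotProduct_add]
    simp only [mulVec_sub, dotProduct_sub, sub_dotProduct]
    linarith [c1, c2, c2', c3, c4]
  have h1 : 0 ≤ (τ - τ₀) ⬝ᵥ (M *ᵥ (τ - τ₀)) := by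
    simpa using hMpd.posSemidef.dotProduct_mulVec_nonneg (τ - τ₀)
  have h2 : 0 ≤ (Y - X *ᵥ τ) ⬝ᵥ (Y - X *ᵥ τ) := Finset.sum_nonneg fun i _ => mul_self_nonneg _
  refine ⟨heq, by rw [heq]; positivity, fun b₀ hb₀ => ?_⟩
  constructor <;> nlinarith [heq, h1, h2]
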